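/- For fixed α ∈ (0,1/2), the function β ↦ F(α,β) = 2(α ln(α/(1-β)) + (1-α) ln((1-α)/β)) / (Φ⁻¹(α) + Φ⁻¹(β))² tends to 1 - α as β → 0⁺. -/

import Mathlib

open Real Set Filter Topology
open MeasureTheory

noncomputable def phi (y : ℝ) : ℝ := (Real.sqrt (2 * Real.pi))⁻¹ * Real.exp (-y ^ 2 / 2)

noncomputable def Phi (x : ℝ) : ℝ := ∫ y in Set.Iic x, phi y

noncomputable def PhiInv (a : ℝ) : ℝ := Function.invFun Phi a

lemma phi_pos (y : ℝ) : 0 < phi y := by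
  apply mul_pos (inv_pos.2 (Real.sqrt_pos.2 (by positivity))) (Real.exp_pos _)

lemma integrable_phi : Integrable phi := by
  have h := integrable_exp_neg_mul_sq (b := (1:ℝ)/2) (by norm_num)
  have : (fun y : ℝ => Real.exp (-(1/2) * y ^ 2)) = fun y : ℝ => Real.exp (-y ^ 2 / 2) := by
    ext y; ring_nf
  rw [this] at h
  exact h.const_mul _

lemma Phi_strictMono : StrictMono Phi := by
  intro a b hab
  have h1 : Phi b - Phi a = ∫ y in a..b, phi y :=
    intervalIntegral.integral_Iic_sub_Iic integrable_phi.integrableOn integrable_phi.integrableOn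
  have h2 : 0 < ∫ y in a..b, phi y :=
    intervalIntegral.intervalIntegral_pos_of_pos integrable_phi.intervalIntegrable
      phi_pos hab
  linarith

lemma Phi_nonneg (x : ℝ) : 0 ≤ Phi x :=
  setIntegral_nonneg measurableSet_Iic (fun y _ => (phi_pos y).le)

lemma Phi_pos (x : ℝ) : 0 < Phi x := by
  have h := Phi_strictMono (show x - 1 < x by linarith)
  have := Phi_nonneg (x - 1)
  linarith

lemma Phi_le {x : ℝ} (hx : x ≤ -1) : Phi x ≤ phi x := by
  have key : ∀ y ∈ Iic x, phi y ≤ phi x * Real.exp (y - x) := by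
    intro y hy
    simp only [mem_Iic] at hy
    unfold phi
    rw [mul_assoc, ← Real.exp_add]
    gcongr (Real.sqrt (2*Real.pi))⁻¹ * ?_
    · apply Real.exp_le_exp.2
      nlinarith
  have hint : IntegrableOn (fun y => phi x * Real.exp (y - x)) (Iic x) := by
    have : IntegrableOn (fun y : ℝ => Real.exp y) (Iic x) := integrableOn_exp_Iic x
    simpa [Real.exp_sub, mul_div_assoc, IntegrableOn] using (this.div_const (Real.exp x)).const_mul (phi x)
  have h1 : Phi x ≤ ∫ y in Iic x, phi x * Real.exp (y - x) :=
    setIntegral_mono_on integrable_phi.integrableOn hint measurableSet_Iic key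
  have h2 : ∫ y in Iic x, phi x * Real.exp (y - x) = phi x := by
    rw [integral_const_mul,
      show (fun y => Real.exp (y - x)) = fun y => Real.exp y / Real.exp x from
        funext fun y => Real.exp_sub y x,
      integral_div, integral_exp_Iic, div_self (Real.exp_ne_zero x), mul_one]
  rw [h2] at h1; exact h1

lemma phi_le_phi {a b : ℝ} (hb : b ≤ 0) (hab : a ≤ b) : phi a ≤ phi b := by
  unfold phi
  gcongr (Real.sqrt (2*Real.pi))⁻¹ * ?_
  apply Real.exp_le_exp.2
  nlinarith

lemma Phi_ge {x : ℝ} (hx : x ≤ 0) : phi (x - 1) ≤ Phi x := by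
  have h1 : phi (x-1) * (volume (Icc (x-1) x)).toReal ≤ ∫ y in Icc (x-1) x, phi y := by
    apply setIntegral_ge_of_const_le_real (μ := volume) measurableSet_Icc (by simp)
    · intro y hy
      exact phi_le_phi (hy.2.trans hx) hy.1
    · exact integrable_phi.integrableOn
  have h2 : (volume (Icc (x-1) x)).toReal = 1 := by
    rw [Real.volume_Icc]; norm_num
  rw [h2, mul_one] at h1
  refine h1.trans (setIntegral_mono_set integrable_phi.integrableOn
    (Eventually.of_forall fun y => (phi_pos y).le) (HasSubset.Subset.eventuallyLE ?_))
  exact fun y hy => hy.2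

lemma integral_phi : ∫ y, phi y = 1 := by
  unfold phi
  rw [integral_const_mul,
    show (fun y : ℝ => Real.exp (-y ^ 2 / 2)) = fun y : ℝ => Real.exp (-(1/2) * y ^ 2) from
      funext fun y => by ring_nf,
    integral_gaussian]
  rw [show Real.pi / (1/2) = 2 * Real.pi by ring]
  rw [inv_mul_cancel₀ (Real.sqrt_ne_zero'.2 (by positivity))]

lemma phi_neg (y : ℝ) : phi (-y) = phi y := by unfold phi; rw [neg_pow]; ring_nf

lemma Phi_symm (x : ℝ) : Phi x = 1 - Phi (-x) := by
  have h1 : Phi x + ∫ y in Ioi x, phi y = 1 := by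
    unfold Phi
    rw [intervalIntegral.integral_Iic_add_Ioi integrable_phi.integrableOn integrable_phi.integrableOn]
    exact integral_phi
  have h2 : ∫ y in Ioi x, phi y = Phi (-x) := by
    have h3 := integral_comp_neg_Iic (-x) phi
    rw [neg_neg] at h3
    rw [← h3]
    unfold Phi
    congr 1
    exact funext fun y => phi_neg y
  linarith

lemma Phi_lt_one (x : ℝ) : Phi x < 1 := by
  have := Phi_pos (-x); rw [Phi_symm x]; linarith

lemma Phi_tendsto_atBot : Tendsto Phi atBot (𝓝 0) := by
  have h1 : Tendsto phi atBot (𝓝 0) := by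
    unfold phi
    rw [show (0:ℝ) = (Real.sqrt (2*Real.pi))⁻¹ * 0 by ring]
    apply Tendsto.const_mul
    apply Real.tendsto_exp_atBot.comp
    apply Tendsto.atBot_div_const (by norm_num)
    have hsq : Tendsto (fun x : ℝ => x ^ 2) atBot atTop := by
      have := Filter.Tendsto.atBot_mul_atBot₀ (@tendsto_id ℝ atBot) (@tendsto_id ℝ atBot)
      exact this.congr fun x => (sq x).symm
    exact tendsto_neg_atTop_atBot.comp hsq
  apply tendsto_of_tendsto_of_tendsto_of_le_of_le' tendsto_const_nhds h1
  · exact Eventually.of_forall fun x => Phi_nonneg x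
  · filter_upwards [eventually_le_atBot (-1:ℝ)] with x hx using Phi_le hx

lemma Phi_tendsto_atTop : Tendsto Phi atTop (𝓝 1) := by
  have : Tendsto (fun x => 1 - Phi (-x)) atTop (𝓝 1) := by
    have h := (tendsto_const_nhds (x := (1:ℝ)) (f := atTop)).sub
      (Phi_tendsto_atBot.comp tendsto_neg_atTop_atBot)
    simpa using h
  exact this.congr fun x => (Phi_symm x).symm

lemma Phi_continuous : Continuous Phi := by
  have h : Continuous fun x => ∫ y in (0:ℝ)..x, phi y :=
    intervalIntegral.continuous_primitive (fun a b => integrable_phi.intervalIntegrable) 0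
  have : Continuous fun x => Phi 0 + ∫ y in (0:ℝ)..x, phi y := continuous_const.add h
  refine this.congr fun x => ?_
  rw [← intervalIntegral.integral_Iic_sub_Iic integrable_phi.integrableOn
    integrable_phi.integrableOn]
  unfold Phi; ring

lemma Phi_surj {a : ℝ} (ha : a ∈ Ioo (0:ℝ) 1) : ∃ x, Phi x = a := by
  obtain ⟨lo, hlo⟩ := (Phi_tendsto_atBot.eventually (eventually_lt_nhds ha.1)).exists
  obtain ⟨hi, hhi⟩ := (Phi_tendsto_atTop.eventually (eventually_gt_nhds ha.2)).exists
  obtain ⟨x, _, hx⟩ := intermediate_value_Icc (le_of_lt (lt_of_not_ge fun h => by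
      have := Phi_strictMono.le_iff_le.2 h; linarith)) Phi_continuous.continuousOn
    (show a ∈ Icc (Phi lo) (Phi hi) from ⟨hlo.le, hhi.le⟩)
  exact ⟨x, hx⟩

lemma Phi_PhiInv {a : ℝ} (ha : a ∈ Ioo (0:ℝ) 1) : Phi (PhiInv a) = a :=
  Function.invFun_eq (Phi_surj ha)

lemma PhiInv_tendsto : Tendsto PhiInv (𝓝[>] (0:ℝ)) atBot := by
  rw [tendsto_atBot]
  intro M
  have h1 : Ioo (0:ℝ) (min (Phi M) 1) ∈ 𝓝[>] (0:ℝ) :=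
    Ioo_mem_nhdsGT_of_mem ⟨le_refl 0, lt_min (Phi_pos M) one_pos⟩
  filter_upwards [h1] with β hβ
  have hβ1 : β ∈ Ioo (0:ℝ) 1 := ⟨hβ.1, hβ.2.trans_le (min_le_right _ _)⟩
  have h2 : Phi (PhiInv β) < Phi M := by
    rw [Phi_PhiInv hβ1]; exact hβ.2.trans_le (min_le_left _ _)
  exact (Phi_strictMono.lt_iff_lt.1 h2).le

lemma quad_div_sq (a b c : ℝ) :
    Tendsto (fun t : ℝ => (a * t ^ 2 + b * t + c) / t ^ 2) atBot (𝓝 a) := by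
  have hi : Tendsto (fun t : ℝ => t⁻¹) atBot (𝓝 0) := by
    have h := (tendsto_neg_atBot_atTop : Tendsto (fun t : ℝ => -t) atBot atTop).inv_tendsto_atTop
    have h2 := h.neg
    simp only [Pi.inv_apply] at h2
    simpa using h2.congr fun t => by rw [← inv_neg, neg_neg]
  have h1 : Tendsto (fun t : ℝ => a + b * t⁻¹ + c * t⁻¹ ^ 2) atBot (𝓝 a) := by
    have := (tendsto_const_nhds (x := a) (f := atBot (α := ℝ))).add
      ((hi.const_mul b).add ((hi.pow 2).const_mul c))
    simpa [add_assoc] using this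
  apply h1.congr'
  filter_upwards [eventually_lt_atBot (0:ℝ)] with t ht
  have : t ≠ 0 := ht.ne
  field_simp

lemma neg_log_tendsto : Tendsto (fun β : ℝ => -Real.log β) (𝓝[>] (0:ℝ)) atTop :=
  tendsto_neg_atBot_atTop.comp Real.tendsto_log_nhdsGT_zero

lemma claim2 : Tendsto (fun β : ℝ => -Real.log β / (PhiInv β) ^ 2) (𝓝[>] (0:ℝ)) (𝓝 (1/2)) := by
  set C := Real.log (Real.sqrt (2 * Real.pi)) with hC
  have hlow := (quad_div_sq (1/2) 0 C).comp PhiInv_tendsto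
  have hhigh := (quad_div_sq (1/2) (-1) (1/2 + C)).comp PhiInv_tendsto
  have hmem : Ioo (0:ℝ) 1 ∈ 𝓝[>] (0:ℝ) := Ioo_mem_nhdsGT_of_mem ⟨le_refl 0, one_pos⟩
  have hlogc : Real.log ((Real.sqrt (2 * Real.pi))⁻¹) = -C := by rw [Real.log_inv]
  have hsqrtpos : (0:ℝ) < Real.sqrt (2 * Real.pi) := Real.sqrt_pos.2 (by positivity)
  apply tendsto_of_tendsto_of_tendsto_of_le_of_le' hlow hhigh
  · filter_upwards [PhiInv_tendsto.eventually (eventually_le_atBot (-1:ℝ)), hmem]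
      with β h1 h2
    set y := PhiInv β with hy
    have hy2 : (0:ℝ) < y ^ 2 := by nlinarith
    rw [Function.comp_apply, div_le_div_iff_of_pos_right hy2, ← hy]
    have hβ : Phi y = β := Phi_PhiInv h2
    have hle : β ≤ phi y := hβ ▸ Phi_le h1
    have hlog : Real.log β ≤ -C + -y ^ 2 / 2 := by
      calc Real.log β ≤ Real.log (phi y) := Real.log_le_log h2.1 hle
        _ = -C + -y ^ 2 / 2 := by
          unfold phi; rw [Real.log_mul (by positivity) (Real.exp_ne_zero _), hlogc,
            Real.log_exp]
    nlinarith
  · filter_upwards [PhiInv_tendsto.eventually (eventually_le_atBot (-1:ℝ)), hmem]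
      with β h1 h2
    set y := PhiInv β with hy
    have hy2 : (0:ℝ) < y ^ 2 := by nlinarith
    rw [Function.comp_apply, div_le_div_iff_of_pos_right hy2, ← hy]
    have hβ : Phi y = β := Phi_PhiInv h2
    have hge : phi (y - 1) ≤ β := hβ ▸ Phi_ge (by linarith)
    have hlog : -C + -(y-1) ^ 2 / 2 ≤ Real.log β := by
      calc -C + -(y-1) ^ 2 / 2 = Real.log (phi (y-1)) := by
            unfold phi; rw [Real.log_mul (by positivity) (Real.exp_ne_zero _), hlogc,
              Real.log_exp]
        _ ≤ Real.log β := Real.log_le_log (phi_pos _) hge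
    nlinarith

theorem F_limit_beta_zero (α : ℝ) (hα : α ∈ Set.Ioo (0 : ℝ) (1 / 2)) :
    Filter.Tendsto
      (fun β : ℝ =>
        2 * (α * Real.log (α / (1 - β)) + (1 - α) * Real.log ((1 - α) / β))
          / (PhiInv α + PhiInv β) ^ 2)
      (𝓝[>] 0) (𝓝 (1 - α)) := by
  obtain ⟨hα0, hα2⟩ := hα
  have hα1 : α < 1 := by linarith
  set c := PhiInv α with hc
  have hmem : Ioo (0:ℝ) 1 ∈ 𝓝[>] (0:ℝ) := Ioo_mem_nhdsGT_of_mem ⟨le_refl 0, one_pos⟩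
  have hq : Tendsto (fun β : ℝ => -Real.log β) (𝓝[>] (0:ℝ)) atTop := neg_log_tendsto
  -- first factor
  have h1 : Tendsto (fun β : ℝ =>
      2 * (α * Real.log (α / (1 - β)) + (1 - α) * Real.log ((1 - α) / β))
        / (2 * (-Real.log β))) (𝓝[>] (0:ℝ)) (𝓝 (1 - α)) := by
    have ha : Tendsto (fun β : ℝ => α * Real.log (α / (1 - β)) + (1 - α) * Real.log (1 - α))
        (𝓝[>] (0:ℝ)) (𝓝 (α * Real.log α + (1 - α) * Real.log (1 - α))) := by
      have h0 : ContinuousAt (fun β : ℝ => α / (1 - β)) 0 :=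
        continuousAt_const.div (continuousAt_const.sub continuousAt_id) (by norm_num)
      have hcont : ContinuousAt
          (fun β : ℝ => α * Real.log (α / (1 - β)) + (1 - α) * Real.log (1 - α)) 0 :=
        (continuousAt_const.mul (h0.log (by norm_num [hα0.ne']))).add continuousAt_const
      have h5 := hcont.tendsto.mono_left (nhdsWithin_le_nhds (s := Ioi (0:ℝ)))
      simpa using h5
    have hz := ha.div_atTop hq
    have hsum := hz.add (tendsto_const_nhds (x := 1 - α) (f := 𝓝[>] (0:ℝ)))
    rw [zero_add] at hsum
    apply hsum.congr'
    filter_upwards [hmem] with β hβ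
    have hβ0 : (0:ℝ) < β := hβ.1
    have hβ1 : β < 1 := hβ.2
    have hlq : (0:ℝ) < -Real.log β := by
      have := Real.log_neg hβ0 hβ1; linarith
    have hld : Real.log ((1 - α) / β) = Real.log (1 - α) + -Real.log β := by
      rw [Real.log_div (by linarith) hβ0.ne']; ring
    have hlog0 : Real.log β ≠ 0 := by linarith
    rw [hld]
    field_simp
    ring
  -- second factor
  have h2 : Tendsto (fun β : ℝ => 2 * (-Real.log β) / (PhiInv β) ^ 2)
      (𝓝[>] (0:ℝ)) (𝓝 1) := by
    have := claim2.const_mul (2:ℝ)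
    norm_num at this
    apply this.congr
    intro β
    rw [mul_div_assoc]
  -- third factor
  have h3 : Tendsto (fun β : ℝ => (PhiInv β) ^ 2 / (c + PhiInv β) ^ 2)
      (𝓝[>] (0:ℝ)) (𝓝 1) := by
    have hq3 := (quad_div_sq 1 (2 * c) (c ^ 2)).comp PhiInv_tendsto
    have hinv := hq3.inv₀ one_ne_zero
    rw [inv_one] at hinv
    apply hinv.congr
    intro β
    rw [Function.comp_apply, inv_div]
    congr 1
    ring
  have hprod := (h1.mul h2).mul h3
  rw [mul_one, mul_one] at hprod
  apply hprod.congr'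
  filter_upwards [hmem, PhiInv_tendsto.eventually (eventually_le_atBot (-(|c| + 1)))]
    with β hβ hy
  have hβ0 : (0:ℝ) < β := hβ.1
  have hβ1 : β < 1 := hβ.2
  have hlq : (0:ℝ) < -Real.log β := by
    have := Real.log_neg hβ0 hβ1; linarith
  have hy0 : PhiInv β ≠ 0 := by
    have : |c| + 1 > 0 := by positivity
    intro h; rw [h] at hy; linarith
  have hlog0 : Real.log β ≠ 0 := by linarith
  have hD : c + PhiInv β ≠ 0 := by
    have h2 := le_abs_self c
    intro h
    linarith
  field_simp
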